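/- Let A = (A_j)_{j≥1} be a partition of ℝ^d into cubes of side length s ∈ (0,1], X := [-1,1]^d, and r ≥ s/2. Then for every j ∈ J_F^r the infinite-sample histogram rule classifies the cell A_j correctly: P_X((X_1 △ {h_{P,s} ≥ 0}) ∩ A_j) = 0. Consequently, the approximation error on F_r vanishes: R_{L_{F_r},P}(h_{P,s}) − R*_{L_{F_r},P} = 0 and hence inf_{f∈F} R_{L_{F_r},P}(f) = R*_{L_{F_r},P}. -/

import Mathlib

open MeasureTheory Set Metric
open scoped Classical ENNReal NNReal

noncomputable section

namespace RefinedMargin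

abbrev Pt (d : ℕ) := Fin d → ℝ

/-- The input space `X = [-1,1]^d` (with the supremum norm coming from `Fin d → ℝ`). -/
def cubeX (d : ℕ) : Set (Pt d) := Set.Icc (fun _ => (-1 : ℝ)) (fun _ => (1 : ℝ))

variable {d : ℕ} {s : ℝ}

/-- `X_1 = {x ∈ X : η x > 1/2}`. -/
def X1 (η : Pt d → ℝ) : Set (Pt d) := {x | x ∈ cubeX d ∧ 1 / 2 < η x}

/-- `X_{-1} = {x ∈ X : η x < 1/2}`. -/
def Xm1 (η : Pt d → ℝ) : Set (Pt d) := {x | x ∈ cubeX d ∧ η x < 1 / 2}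

/-- `X_0 = {x ∈ X : η x = 1/2}`. -/
def X0 (η : Pt d → ℝ) : Set (Pt d) := {x | x ∈ cubeX d ∧ η x = 1 / 2}

/-- Distance to the decision boundary. -/
def Δ (η : Pt d → ℝ) (x : Pt d) : ℝ :=
  if x ∈ Xm1 η then Metric.infDist x (X1 η)
  else if x ∈ X1 η then Metric.infDist x (Xm1 η)
  else 0

/-- Relative boundary of `T` in `X`. -/
def relBoundary (X T : Set (Pt d)) : Set (Pt d) := closure T ∩ closure (X \ T) ∩ X

/-- `T` is `m`-rectifiable: the image of a bounded subset of `ℝ^m` under a Lipschitz map. -/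
def IsRectifiable (m : ℕ) (T : Set (Pt d)) : Prop :=
  ∃ (B : Set (Fin m → ℝ)) (g : (Fin m → ℝ) → Pt d) (K : NNReal),
    Bornology.IsBounded B ∧ LipschitzOnWith K g B ∧ g '' B = T

/-- Margin exponent `α` with constant `cME`. -/
def HasME (μ : Measure (Pt d)) (η : Pt d → ℝ) (α cME : ℝ) : Prop :=
  ∀ t : ℝ, 0 < t → μ {x | Δ η x < t} ≤ ENNReal.ofReal ((cME * t) ^ α)

/-- Margin-noise exponent `β` with constant `cMNE`. -/
def HasMNE (μ : Measure (Pt d)) (η : Pt d → ℝ) (β cMNE : ℝ) : Prop :=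
  ∀ t : ℝ, 0 < t → (∫ x in {x | Δ η x < t}, |2 * η x - 1| ∂μ) ≤ (cMNE * t) ^ β

/-- The distance to the decision boundary controls the noise from below with
exponent `γ` and constant `cLC`. -/
def LowerControl (μ : Measure (Pt d)) (η : Pt d → ℝ) (γ cLC : ℝ) : Prop :=
  ∀ᵐ x ∂μ, Δ η x ^ γ ≤ cLC * |2 * η x - 1|

/-- A partition of `ℝ^d` into (half-open) cubes of side length `s`. -/
structure CubePartition (d : ℕ) (s : ℝ) where
  cell : ℕ → Set (Pt d)
  isCube : ∀ j, ∃ a : Pt d, cell j = {x | ∀ i, a i ≤ x i ∧ x i < a i + s}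
  covers : ∀ x : Pt d, ∃! j, x ∈ cell j

namespace CubePartition

/-- Index of the unique cell containing `x`. -/
def idx (𝒜 : CubePartition d s) (x : Pt d) : ℕ := (𝒜.covers x).choose

/-- The unique cell `A(x)` containing `x`. -/
def cellOf (𝒜 : CubePartition d s) (x : Pt d) : Set (Pt d) := 𝒜.cell (𝒜.idx x)

/-- Indices of cells intersecting `X`. -/
def J (𝒜 : CubePartition d s) : Set ℕ := {j | (𝒜.cell j ∩ cubeX d).Nonempty}

/-- Indices of cells near the decision boundary. -/
def JN (𝒜 : CubePartition d s) (η : Pt d → ℝ) (r : ℝ) : Set ℕ :=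
  {j | j ∈ 𝒜.J ∧ ∀ x ∈ 𝒜.cell j ∩ cubeX d, Δ η x ≤ 3 * r}

/-- Indices of cells far from the decision boundary. -/
def JF (𝒜 : CubePartition d s) (η : Pt d → ℝ) (r : ℝ) : Set ℕ :=
  {j | j ∈ 𝒜.J ∧ ∀ x ∈ 𝒜.cell j ∩ cubeX d, r ≤ Δ η x}

/-- `N_r`, the union of the cells near the decision boundary. -/
def Nr (𝒜 : CubePartition d s) (η : Pt d → ℝ) (r : ℝ) : Set (Pt d) := ⋃ j ∈ 𝒜.JN η r, 𝒜.cell j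

/-- `F_r`, the union of the cells far from the decision boundary. -/
def Fr (𝒜 : CubePartition d s) (η : Pt d → ℝ) (r : ℝ) : Set (Pt d) := ⋃ j ∈ 𝒜.JF η r, 𝒜.cell j

end CubePartition

/-- `sign` with the convention `sign 0 = 1`. -/
def sgn (t : ℝ) : ℝ := if 0 ≤ t then 1 else -1

/-- The classification loss `L(y,t) = 1_{(-∞,0]}(y · sign t)`. -/
def cLoss (y t : ℝ) : ℝ := if y * sgn t ≤ 0 then 1 else 0

/-- The restricted classification loss `L_T(x,y,t) = 1_T(x) L(y,t)`. -/
def rLoss (T : Set (Pt d)) (x : Pt d) (y t : ℝ) : ℝ := if x ∈ T then cLoss y t else 0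

/-- The joint distribution `P` on `X × {-1,1} ⊆ ℝ^d × ℝ` built from the marginal `μ = P_X`
and the posterior probability `η`. -/
def joint (μ : Measure (Pt d)) (η : Pt d → ℝ) : Measure (Pt d × ℝ) :=
  μ.bind fun x =>
    ENNReal.ofReal (η x) • Measure.dirac (x, 1) + ENNReal.ofReal (1 - η x) • Measure.dirac (x, -1)

/-- The risk `R_{L_T,P}(f)`. -/
def risk (P : Measure (Pt d × ℝ)) (T : Set (Pt d)) (f : Pt d → ℝ) : ℝ :=
  ∫ z, rLoss T z.1 z.2 (f z.1) ∂P

/-- The Bayes risk `R*_{L_T,P}`, the infimum over all measurable functions. -/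
def bayesRisk (P : Measure (Pt d × ℝ)) (T : Set (Pt d)) : ℝ :=
  ⨅ f : { f : Pt d → ℝ // Measurable f }, risk P T f.1

/-- The Bayes decision function `sign (2η - 1)`. -/
def bayesF (η : Pt d → ℝ) (x : Pt d) : ℝ := sgn (2 * η x - 1)

/-- The empirical risk of `f` on the dataset `D` for the restricted loss `L_T`. -/
def empRisk {n : ℕ} (D : Fin n → Pt d × ℝ) (T : Set (Pt d)) (f : Pt d → ℝ) : ℝ :=
  (∑ i, rLoss T (D i).1 (D i).2 (f (D i).1)) / (n : ℝ)

/-- `f_{D,s}`. -/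
def fHat (𝒜 : CubePartition d s) {n : ℕ} (D : Fin n → Pt d × ℝ) (x : Pt d) : ℝ :=
  ((∑ i, if (D i).2 = 1 ∧ (D i).1 ∈ 𝒜.cellOf x then (1 : ℝ) else 0) -
      ∑ i, if (D i).2 = -1 ∧ (D i).1 ∈ 𝒜.cellOf x then (1 : ℝ) else 0) / (n : ℝ)

/-- The empirical histogram rule `h_{D,s} = sign f_{D,s}`. -/
def histRule (𝒜 : CubePartition d s) {n : ℕ} (D : Fin n → Pt d × ℝ) (x : Pt d) : ℝ :=
  sgn (fHat 𝒜 D x)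

/-- `f_{P,s}`. -/
def fBar (𝒜 : CubePartition d s) (P : Measure (Pt d × ℝ)) (x : Pt d) : ℝ :=
  (P (𝒜.cellOf x ×ˢ ({1} : Set ℝ))).toReal - (P (𝒜.cellOf x ×ˢ ({-1} : Set ℝ))).toReal

/-- The infinite-sample histogram rule `h_{P,s} = sign f_{P,s}`. -/
def histRuleP (𝒜 : CubePartition d s) (P : Measure (Pt d × ℝ)) (x : Pt d) : ℝ :=
  sgn (fBar 𝒜 P x)

/-- The class `𝓕` of `±1`-valued functions which are constant on the cells meeting `X`
(and `0` elsewhere). -/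
def histClass (𝒜 : CubePartition d s) : Set (Pt d → ℝ) :=
  {f | ∃ c : ℕ → ℝ, (∀ j, c j = 1 ∨ c j = -1) ∧
    ∀ x, f x = if 𝒜.idx x ∈ 𝒜.J then c (𝒜.idx x) else 0}

/-- The `n`-fold product measure `P^n`. -/
def Pn (μ : Measure (Pt d)) (η : Pt d → ℝ) (n : ℕ) : Measure (Fin n → Pt d × ℝ) :=
  Measure.pi fun _ => joint μ η


section Aux

variable {d : ℕ} {s : ℝ} {η : Pt d → ℝ} {μ : Measure (Pt d)}

lemma sgn_of_nonneg {t : ℝ} (h : 0 ≤ t) : sgn t = 1 := if_pos h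
lemma sgn_of_neg {t : ℝ} (h : t < 0) : sgn t = -1 := if_neg (not_le.2 h)
lemma sgn_le_zero_iff {t : ℝ} : sgn t ≤ 0 ↔ t < 0 := by
  unfold sgn; split <;> constructor <;> intro h' <;> linarith
lemma neg_sgn_le_zero_iff {t : ℝ} : -sgn t ≤ 0 ↔ 0 ≤ t := by
  unfold sgn; split <;> constructor <;> intro h' <;> linarith
lemma measurable_sgn : Measurable sgn :=
  Measurable.ite (measurableSet_le measurable_const measurable_id) measurable_const
    measurable_const

lemma measurableSet_cubeX : MeasurableSet (cubeX d) := by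
  rw [cubeX, ← Set.pi_univ_Icc]
  exact MeasurableSet.univ_pi fun i => measurableSet_Icc

namespace CubePartition

lemma measurableSet_cell (𝒜 : CubePartition d s) (j : ℕ) : MeasurableSet (𝒜.cell j) := by
  obtain ⟨a, ha⟩ := 𝒜.isCube j
  rw [ha]
  have : {x : Pt d | ∀ i, a i ≤ x i ∧ x i < a i + s} =
      ⋂ i, ({x : Pt d | a i ≤ x i} ∩ {x : Pt d | x i < a i + s}) := by
    ext x; simp [Set.mem_iInter, forall_and]
  rw [this]
  exact MeasurableSet.iInter fun i =>
    ((measurableSet_le measurable_const (measurable_pi_apply i)).inter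
      (measurableSet_lt (measurable_pi_apply i) measurable_const))

lemma mem_cell_idx (𝒜 : CubePartition d s) (x : Pt d) : x ∈ 𝒜.cell (𝒜.idx x) :=
  (𝒜.covers x).choose_spec.1

lemma idx_eq (𝒜 : CubePartition d s) {x : Pt d} {j : ℕ} (h : x ∈ 𝒜.cell j) : 𝒜.idx x = j :=
  ((𝒜.covers x).choose_spec.2 j h).symm

lemma cellOf_eq (𝒜 : CubePartition d s) {x : Pt d} {j : ℕ} (h : x ∈ 𝒜.cell j) :
    𝒜.cellOf x = 𝒜.cell j := by rw [cellOf, 𝒜.idx_eq h]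

lemma measurable_idx (𝒜 : CubePartition d s) : Measurable 𝒜.idx := by
  apply measurable_to_countable'
  intro j
  have : 𝒜.idx ⁻¹' {j} = 𝒜.cell j := by
    ext x
    constructor
    · intro h
      rw [Set.mem_preimage, Set.mem_singleton_iff] at h
      exact h ▸ 𝒜.mem_cell_idx x
    · intro h
      simp [Set.mem_preimage, 𝒜.idx_eq h]
  rw [this]
  exact 𝒜.measurableSet_cell j

lemma measurableSet_Fr (𝒜 : CubePartition d s) (η : Pt d → ℝ) (r : ℝ) :
    MeasurableSet (𝒜.Fr η r) :=
  MeasurableSet.biUnion (Set.to_countable _) fun j _ => 𝒜.measurableSet_cell j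

end CubePartition

end Aux


section Aux2

variable {d : ℕ} {s : ℝ} {η : Pt d → ℝ} {μ : Measure (Pt d)}

/-- The conditional risk density of `f`. -/
def gfun (η : Pt d → ℝ) (f : Pt d → ℝ) (x : Pt d) : ℝ≥0∞ :=
  if 0 ≤ f x then ENNReal.ofReal (1 - η x) else ENNReal.ofReal (η x)

/-- The Bayes conditional risk density. -/
def mfun (η : Pt d → ℝ) (x : Pt d) : ℝ≥0∞ :=
  min (ENNReal.ofReal (η x)) (ENNReal.ofReal (1 - η x))

lemma meas_ind {t : Set (Pt d × ℝ)} (ht : MeasurableSet t) (c : ℝ) :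
    Measurable fun x : Pt d => t.indicator (1 : Pt d × ℝ → ℝ≥0∞) (x, c) := by
  have : (fun x : Pt d => t.indicator (1 : Pt d × ℝ → ℝ≥0∞) (x, c)) =
      ((fun x : Pt d => (x, c)) ⁻¹' t).indicator 1 := by
    ext x; by_cases hx : (x, c) ∈ t <;> simp [Set.indicator_apply, hx]
  rw [this]
  exact measurable_const.indicator (ht.preimage (measurable_id.prodMk measurable_const))

lemma measurable_kernel (hmeasη : Measurable η) :
    Measurable (fun x => ENNReal.ofReal (η x) • Measure.dirac (x, (1:ℝ)) +
      ENNReal.ofReal (1 - η x) • Measure.dirac (x, (-1:ℝ))) := by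
  apply Measure.measurable_of_measurable_coe
  intro t ht
  simp only [Measure.coe_add, Pi.add_apply, Measure.smul_apply, smul_eq_mul,
    Measure.dirac_apply' _ ht]
  exact ((ENNReal.measurable_ofReal.comp hmeasη).mul (meas_ind ht 1)).add
    ((ENNReal.measurable_ofReal.comp (hmeasη.const_sub 1)).mul (meas_ind ht (-1)))

lemma joint_apply (hmeasη : Measurable η) {S : Set (Pt d × ℝ)} (hS : MeasurableSet S) :
    joint μ η S = ∫⁻ x, (ENNReal.ofReal (η x) * S.indicator 1 (x, 1) +
      ENNReal.ofReal (1 - η x) * S.indicator 1 (x, -1)) ∂μ := by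
  rw [joint, Measure.bind_apply hS (measurable_kernel hmeasη).aemeasurable]
  simp only [Measure.coe_add, Pi.add_apply, Measure.smul_apply, smul_eq_mul,
    Measure.dirac_apply' _ hS]

lemma joint_prod_pos (hmeasη : Measurable η) {B : Set (Pt d)} (hB : MeasurableSet B) :
    joint μ η (B ×ˢ ({1} : Set ℝ)) = ∫⁻ x in B, ENNReal.ofReal (η x) ∂μ := by
  rw [joint_apply hmeasη (hB.prod (measurableSet_singleton _)), ← lintegral_indicator hB]
  congr 1; ext x
  by_cases hx : x ∈ B <;>
    simp only [Set.indicator_apply, Set.prodMk_mem_set_prod_eq, Set.mem_singleton_iff, hx] <;>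
    norm_num

lemma joint_prod_neg (hmeasη : Measurable η) {B : Set (Pt d)} (hB : MeasurableSet B) :
    joint μ η (B ×ˢ ({-1} : Set ℝ)) = ∫⁻ x in B, ENNReal.ofReal (1 - η x) ∂μ := by
  rw [joint_apply hmeasη (hB.prod (measurableSet_singleton _)), ← lintegral_indicator hB]
  congr 1; ext x
  by_cases hx : x ∈ B <;>
    simp only [Set.indicator_apply, Set.prodMk_mem_set_prod_eq, Set.mem_singleton_iff, hx] <;>
    norm_num

lemma risk_eq (hmeasη : Measurable η) {T : Set (Pt d)} (hT : MeasurableSet T)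
    {f : Pt d → ℝ} (hf : Measurable f) :
    risk (joint μ η) T f = (∫⁻ x in T, gfun η f x ∂μ).toReal := by
  set S : Set (Pt d × ℝ) := {z | z.1 ∈ T ∧ z.2 * sgn (f z.1) ≤ 0} with hSdef
  have hS : MeasurableSet S := by
    apply hT.preimage measurable_fst |>.inter
    exact measurableSet_le (measurable_snd.mul ((measurable_sgn.comp hf).comp measurable_fst))
      measurable_const
  have h1 : risk (joint μ η) T f = (joint μ η S).toReal := by
    rw [risk, ← measureReal_def, ← integral_indicator_one hS]
    congr 1; ext z
    by_cases h1 : z.1 ∈ T <;> by_cases h2 : z.2 * sgn (f z.1) ≤ 0 <;>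
      simp [rLoss, cLoss, h1, h2, hSdef, Set.indicator_apply]
  rw [h1, joint_apply hmeasη hS, ← lintegral_indicator hT]
  congr 2; ext x
  by_cases hx : x ∈ T
  · by_cases hfx : 0 ≤ f x
    · have h1 : ((x, (1:ℝ)) ∈ S) = False := by
        simp only [hSdef, Set.mem_setOf_eq, one_mul, eq_iff_iff, iff_false]
        push_neg
        rw [sgn_of_nonneg hfx]; norm_num
      have h2 : (x, (-1:ℝ)) ∈ S := by
        refine ⟨hx, ?_⟩
        rw [sgn_of_nonneg hfx]; norm_num
      simp [Set.indicator_apply, h1, h2, hx, gfun, hfx]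
    · have h1 : (x, (1:ℝ)) ∈ S := by
        refine ⟨hx, ?_⟩
        rw [sgn_of_neg (not_le.1 hfx)]; norm_num
      have h2 : ((x, (-1:ℝ)) ∈ S) = False := by
        simp only [hSdef, Set.mem_setOf_eq, eq_iff_iff, iff_false]
        push_neg
        rw [sgn_of_neg (not_le.1 hfx)]; norm_num
      simp [Set.indicator_apply, h1, h2, hx, gfun, hfx]
  · have h1 : ((x, (1:ℝ)) ∈ S) = False := by simp [hSdef, hx]
    have h2 : ((x, (-1:ℝ)) ∈ S) = False := by simp [hSdef, hx]
    simp [Set.indicator_apply, h1, h2, hx]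

end Aux2


section Aux3

variable {d : ℕ} {s : ℝ} {η : Pt d → ℝ} {μ : Measure (Pt d)} {T : Set (Pt d)}
  {f : Pt d → ℝ}

lemma gfun_le_one (hη : ∀ x, η x ∈ Set.Icc (0:ℝ) 1) (f : Pt d → ℝ) (x : Pt d) :
    gfun η f x ≤ 1 := by
  have h1 := (hη x).1
  have h2 := (hη x).2
  rw [gfun]; split
  · exact ENNReal.ofReal_le_one.2 (by linarith)
  · exact ENNReal.ofReal_le_one.2 h2

lemma lintegral_gfun_ne_top [IsProbabilityMeasure μ] (hη : ∀ x, η x ∈ Set.Icc (0:ℝ) 1)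
    (f : Pt d → ℝ) (T : Set (Pt d)) : ∫⁻ x in T, gfun η f x ∂μ ≠ ⊤ := by
  have h : ∫⁻ x in T, gfun η f x ∂μ ≤ 1 := by
    calc ∫⁻ x in T, gfun η f x ∂μ ≤ ∫⁻ _ in T, 1 ∂μ := lintegral_mono (gfun_le_one hη f)
    _ = μ T := by simp
    _ ≤ 1 := prob_le_one
  exact ne_top_of_le_ne_top ENNReal.one_ne_top h

lemma mfun_le_gfun (f : Pt d → ℝ) (x : Pt d) : mfun η x ≤ gfun η f x := by
  rw [mfun, gfun]; split
  · exact min_le_right _ _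
  · exact min_le_left _ _

lemma gfun_bayes : gfun η (fun x => 2 * η x - 1) = mfun η := by
  funext x; rw [gfun, mfun]
  split
  · rename_i h
    exact (min_eq_right (ENNReal.ofReal_le_ofReal (by linarith))).symm
  · rename_i h
    push_neg at h
    exact (min_eq_left (ENNReal.ofReal_le_ofReal (by linarith))).symm

lemma risk_ge [IsProbabilityMeasure μ] (hmeasη : Measurable η)
    (hη : ∀ x, η x ∈ Set.Icc (0:ℝ) 1) (hT : MeasurableSet T) (hf : Measurable f) :
    (∫⁻ x in T, mfun η x ∂μ).toReal ≤ risk (joint μ η) T f := by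
  rw [risk_eq hmeasη hT hf]
  exact ENNReal.toReal_mono (lintegral_gfun_ne_top hη f T)
    (lintegral_mono fun x => mfun_le_gfun f x)

lemma bayesRisk_eq [IsProbabilityMeasure μ] (hmeasη : Measurable η)
    (hη : ∀ x, η x ∈ Set.Icc (0:ℝ) 1) (hT : MeasurableSet T) :
    bayesRisk (joint μ η) T = (∫⁻ x in T, mfun η x ∂μ).toReal := by
  have hfstar : Measurable fun x => 2 * η x - 1 :=
    (hmeasη.const_mul 2).sub measurable_const
  apply le_antisymm
  · have hb : BddBelow (Set.range fun f : {f : Pt d → ℝ // Measurable f} =>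
        risk (joint μ η) T f.1) := by
      refine ⟨(∫⁻ x in T, mfun η x ∂μ).toReal, ?_⟩
      rintro y ⟨g, rfl⟩
      exact risk_ge hmeasη hη hT g.2
    calc bayesRisk (joint μ η) T ≤ risk (joint μ η) T (fun x => 2 * η x - 1) :=
          ciInf_le hb ⟨fun x => 2 * η x - 1, hfstar⟩
    _ = (∫⁻ x in T, mfun η x ∂μ).toReal := by rw [risk_eq hmeasη hT hfstar, gfun_bayes]
  · have : Nonempty {f : Pt d → ℝ // Measurable f} := ⟨⟨fun _ => 0, measurable_const⟩⟩
    exact le_ciInf fun g => risk_ge hmeasη hη hT g.2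

end Aux3


section Aux4

variable {d : ℕ} {s : ℝ} {η : Pt d → ℝ} {r : ℝ}

lemma not_mem_Xm1_of_mem_X1 {x : Pt d} (h1 : x ∈ X1 η) : x ∉ Xm1 η := by
  intro h2
  have := h1.2; have := h2.2; linarith

lemma mem_X1_or_Xm1 {x : Pt d} (hΔ : 0 < Δ η x) : x ∈ X1 η ∨ x ∈ Xm1 η := by
  by_contra h
  push_neg at h
  rw [Δ, if_neg h.2, if_neg h.1] at hΔ
  exact lt_irrefl _ hΔ

lemma cell_dichotomy (𝒜 : CubePartition d s) (hd : 1 ≤ d) (hs : s ∈ Set.Ioc (0:ℝ) 1)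
    (hr : s/2 ≤ r) {j : ℕ} (hj : j ∈ 𝒜.JF η r) :
    (𝒜.cell j ∩ cubeX d ⊆ X1 η) ∨ (𝒜.cell j ∩ cubeX d ⊆ Xm1 η) := by
  have hrpos : 0 < r := lt_of_lt_of_le (half_pos hs.1) hr
  by_contra hcon
  push_neg at hcon
  obtain ⟨hn1, hn2⟩ := hcon
  obtain ⟨x, hxmem, hx1⟩ := Set.not_subset.1 hn1
  obtain ⟨y, hymem, hy1⟩ := Set.not_subset.1 hn2
  have hxr : r ≤ Δ η x := hj.2 x hxmem
  have hyr : r ≤ Δ η y := hj.2 y hymem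
  have hx : x ∈ Xm1 η := (mem_X1_or_Xm1 (lt_of_lt_of_le hrpos hxr)).resolve_left hx1
  have hy : y ∈ X1 η := by
    rcases mem_X1_or_Xm1 (lt_of_lt_of_le hrpos hyr) with h | h
    · exact h
    · exact absurd h hy1
  set m : Pt d := fun i => (x i + y i) / 2 with hm
  obtain ⟨a, ha⟩ := 𝒜.isCube j
  have hxc : ∀ i, a i ≤ x i ∧ x i < a i + s := by
    have := hxmem.1; rw [ha] at this; exact this
  have hyc : ∀ i, a i ≤ y i ∧ y i < a i + s := by
    have := hymem.1; rw [ha] at this; exact this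
  have hm_cell : m ∈ 𝒜.cell j := by
    rw [ha]
    intro i
    obtain ⟨h1, h2⟩ := hxc i
    obtain ⟨h3, h4⟩ := hyc i
    constructor
    · show a i ≤ (x i + y i) / 2; linarith
    · show (x i + y i) / 2 < a i + s; linarith
  have hm_X : m ∈ cubeX d := by
    rw [cubeX, Set.mem_Icc]
    obtain ⟨hx2, hx3⟩ := Set.mem_Icc.1 hxmem.2
    obtain ⟨hy2, hy3⟩ := Set.mem_Icc.1 hymem.2
    constructor <;> intro i
    · have h1 : (-1:ℝ) ≤ x i := hx2 i
      have h2 : (-1:ℝ) ≤ y i := hy2 i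
      show (-1:ℝ) ≤ (x i + y i) / 2
      linarith
    · have h1 : x i ≤ (1:ℝ) := hx3 i
      have h2 : y i ≤ (1:ℝ) := hy3 i
      show (x i + y i) / 2 ≤ (1:ℝ)
      linarith
  have hmr : r ≤ Δ η m := hj.2 m ⟨hm_cell, hm_X⟩
  have hdx : dist m x < s / 2 := by
    rw [dist_pi_lt_iff (half_pos hs.1)]
    intro i
    rw [Real.dist_eq]
    obtain ⟨h1, h2⟩ := hxc i
    obtain ⟨h3, h4⟩ := hyc i
    rw [abs_lt]
    constructor
    · show -(s/2) < (x i + y i) / 2 - x i; linarith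
    · show (x i + y i) / 2 - x i < s/2; linarith
  have hdy : dist m y < s / 2 := by
    rw [dist_pi_lt_iff (half_pos hs.1)]
    intro i
    rw [Real.dist_eq]
    obtain ⟨h1, h2⟩ := hxc i
    obtain ⟨h3, h4⟩ := hyc i
    rw [abs_lt]
    constructor
    · show -(s/2) < (x i + y i) / 2 - y i; linarith
    · show (x i + y i) / 2 - y i < s/2; linarith
  rcases mem_X1_or_Xm1 (lt_of_lt_of_le hrpos hmr) with hm1 | hm1
  · have hΔ : Δ η m = infDist m (Xm1 η) := by
      rw [Δ, if_neg (not_mem_Xm1_of_mem_X1 hm1), if_pos hm1]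
    have hle : infDist m (Xm1 η) ≤ dist m x := infDist_le_dist_of_mem hx
    rw [hΔ] at hmr
    linarith
  · have hΔ : Δ η m = infDist m (X1 η) := by rw [Δ, if_pos hm1]
    have hle : infDist m (X1 η) ≤ dist m y := infDist_le_dist_of_mem hy
    rw [hΔ] at hmr
    linarith

end Aux4


section Aux5

variable {d : ℕ} {s : ℝ} {η : Pt d → ℝ} {μ : Measure (Pt d)} {r : ℝ}

lemma fBar_const (𝒜 : CubePartition d s) (P : Measure (Pt d × ℝ)) {x : Pt d} {j : ℕ}
    (hx : x ∈ 𝒜.cell j) :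
    fBar 𝒜 P x =
      (P (𝒜.cell j ×ˢ ({1}:Set ℝ))).toReal - (P (𝒜.cell j ×ˢ ({-1}:Set ℝ))).toReal := by
  rw [fBar, 𝒜.cellOf_eq hx]

lemma ae_mem_cubeX (hμX : μ (cubeX d)ᶜ = 0) : ∀ᵐ x ∂μ, x ∈ cubeX d := by
  rw [ae_iff]; exact hμX

lemma cell_good (𝒜 : CubePartition d s) (hd : 1 ≤ d) (hs : s ∈ Set.Ioc (0:ℝ) 1)
    [IsProbabilityMeasure μ] (hμX : μ (cubeX d)ᶜ = 0)
    (hη : ∀ x, η x ∈ Set.Icc (0:ℝ) 1) (hmeasη : Measurable η) (hr : s/2 ≤ r)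
    {j : ℕ} (hj : j ∈ 𝒜.JF η r) :
    μ ((symmDiff (X1 η) {x | 0 ≤ histRuleP 𝒜 (joint μ η) x}
        ∪ {x | gfun η (histRuleP 𝒜 (joint μ η)) x ≠ mfun η x}) ∩ 𝒜.cell j) = 0 := by
  set A := 𝒜.cell j with hAdef
  have hA : MeasurableSet A := 𝒜.measurableSet_cell j
  set a := ∫⁻ x in A, ENNReal.ofReal (η x) ∂μ with hadef
  set b := ∫⁻ x in A, ENNReal.ofReal (1 - η x) ∂μ with hbdef
  have hval : ∀ x ∈ A, fBar 𝒜 (joint μ η) x = a.toReal - b.toReal := by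
    intro x hx
    rw [fBar_const 𝒜 _ hx, joint_prod_pos hmeasη hA, joint_prod_neg hmeasη hA]
  have ha_ne : a ≠ ⊤ := by
    refine ne_top_of_le_ne_top (measure_ne_top μ A) ?_
    calc a ≤ ∫⁻ _ in A, 1 ∂μ :=
          lintegral_mono fun x => ENNReal.ofReal_le_one.2 (hη x).2
    _ = μ A := by simp
  have hb_ne : b ≠ ⊤ := by
    refine ne_top_of_le_ne_top (measure_ne_top μ A) ?_
    calc b ≤ ∫⁻ _ in A, 1 ∂μ :=
          lintegral_mono fun x => ENNReal.ofReal_le_one.2 (by linarith [(hη x).1])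
    _ = μ A := by simp
  have hnull : μ (A \ cubeX d) = 0 :=
    measure_mono_null (fun x hx => hx.2) hμX
  have hae : ∀ᵐ x ∂μ.restrict A, x ∈ A ∧ x ∈ cubeX d :=
    (ae_restrict_mem hA).and (ae_restrict_of_ae (ae_mem_cubeX hμX))
  rcases cell_dichotomy 𝒜 hd hs hr hj with hsub | hsub
  · -- positive cell
    have hba : b ≤ a := by
      refine lintegral_mono_ae (hae.mono fun x hx => ?_)
      have h1 : x ∈ X1 η := hsub ⟨hx.1, hx.2⟩
      exact ENNReal.ofReal_le_ofReal (by linarith [h1.2])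
    have hhist : ∀ x ∈ A, histRuleP 𝒜 (joint μ η) x = 1 := by
      intro x hx
      rw [histRuleP, hval x hx]
      exact sgn_of_nonneg (by linarith [ENNReal.toReal_mono ha_ne hba])
    refine measure_mono_null ?_ hnull
    rintro x ⟨hbad, hxA⟩
    refine ⟨hxA, fun hxX => ?_⟩
    have hx1 : x ∈ X1 η := hsub ⟨hxA, hxX⟩
    have hH : x ∈ {x | 0 ≤ histRuleP 𝒜 (joint μ η) x} := by
      show (0:ℝ) ≤ _
      rw [hhist x hxA]; norm_num
    rcases hbad with hbad | hbad
    · rcases Set.mem_symmDiff.1 hbad with ⟨_, h⟩ | ⟨_, h⟩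
      · exact h hH
      · exact h hx1
    · apply hbad
      have h0 : (0:ℝ) ≤ histRuleP 𝒜 (joint μ η) x := hH
      rw [gfun, if_pos h0, mfun, min_eq_right (ENNReal.ofReal_le_ofReal (by linarith [hx1.2]))]
  · -- negative cell
    by_cases hA0 : μ A = 0
    · exact measure_mono_null Set.inter_subset_right hA0
    · set c := ∫⁻ x in A, ENNReal.ofReal (1 - 2 * η x) ∂μ with hcdef
      have hc_ne : c ≠ ⊤ := by
        refine ne_top_of_le_ne_top (measure_ne_top μ A) ?_
        calc c ≤ ∫⁻ _ in A, 1 ∂μ :=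
              lintegral_mono fun x => ENNReal.ofReal_le_one.2 (by linarith [(hη x).1])
        _ = μ A := by simp
      have hb_split : b = a + c := by
        have h1 : b = ∫⁻ x in A,
            (ENNReal.ofReal (η x) + ENNReal.ofReal (1 - 2 * η x)) ∂μ := by
          refine lintegral_congr_ae (hae.mono fun x hx => ?_)
          have h1 : x ∈ Xm1 η := hsub ⟨hx.1, hx.2⟩
          show ENNReal.ofReal (1 - η x) =
            ENNReal.ofReal (η x) + ENNReal.ofReal (1 - 2 * η x)
          rw [← ENNReal.ofReal_add (hη x).1 (by linarith [h1.2])]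
          congr 1; ring
        rw [h1, lintegral_add_left hmeasη.ennreal_ofReal]
      have hc_pos : 0 < c := by
        rw [hcdef, lintegral_pos_iff_support
          (((hmeasη.const_mul 2).const_sub 1).ennreal_ofReal)]
        have hsupp : ∀ᵐ x ∂μ.restrict A,
            x ∈ Function.support fun x => ENNReal.ofReal (1 - 2 * η x) := by
          refine hae.mono fun x hx => ?_
          have h1 : x ∈ Xm1 η := hsub ⟨hx.1, hx.2⟩
          simp only [Function.mem_support, ne_eq, ENNReal.ofReal_eq_zero, not_le]
          linarith [h1.2]
        have heq := measure_congr (Filter.eventuallyEq_univ.2 hsupp)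
        simp only [Set.setOf_mem_eq] at heq
        rw [heq, Measure.restrict_apply_univ]
        exact lt_of_le_of_ne zero_le (Ne.symm hA0)
      have hIneg : a.toReal - b.toReal < 0 := by
        rw [hb_split, ENNReal.toReal_add ha_ne hc_ne]
        have : 0 < c.toReal := ENNReal.toReal_pos hc_pos.ne' hc_ne
        linarith
      have hhist : ∀ x ∈ A, histRuleP 𝒜 (joint μ η) x = -1 := by
        intro x hx
        rw [histRuleP, hval x hx]
        exact sgn_of_neg hIneg
      refine measure_mono_null ?_ hnull
      rintro x ⟨hbad, hxA⟩
      refine ⟨hxA, fun hxX => ?_⟩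
      have hx1 : x ∈ Xm1 η := hsub ⟨hxA, hxX⟩
      have hHn : x ∉ {x | 0 ≤ histRuleP 𝒜 (joint μ η) x} := by
        show ¬ (0:ℝ) ≤ _
        rw [hhist x hxA]; norm_num
      rcases hbad with hbad | hbad
      · rcases Set.mem_symmDiff.1 hbad with ⟨h, _⟩ | ⟨h, _⟩
        · exact not_mem_Xm1_of_mem_X1 h hx1
        · exact hHn h
      · apply hbad
        have h0 : ¬ (0:ℝ) ≤ histRuleP 𝒜 (joint μ η) x := hHn
        rw [gfun, if_neg h0, mfun,
          min_eq_left (ENNReal.ofReal_le_ofReal (by linarith [hx1.2]))]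

end Aux5

theorem statement12 (d : ℕ) (hd : 1 ≤ d) (s : ℝ) (hs : s ∈ Set.Ioc (0 : ℝ) 1)
    (𝒜 : CubePartition d s)
    (μ : Measure (Pt d)) [IsProbabilityMeasure μ] (hμX : μ (cubeX d)ᶜ = 0)
    (η : Pt d → ℝ) (hη : ∀ x, η x ∈ Set.Icc (0 : ℝ) 1) (hmeasη : Measurable η)
    (r : ℝ) (hr : s / 2 ≤ r) :
    (∀ j ∈ 𝒜.JF η r,
        μ (symmDiff (X1 η) {x | 0 ≤ histRuleP 𝒜 (joint μ η) x} ∩ 𝒜.cell j) = 0) ∧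
      risk (joint μ η) (𝒜.Fr η r) (histRuleP 𝒜 (joint μ η)) -
          bayesRisk (joint μ η) (𝒜.Fr η r) = 0 ∧
      (⨅ f : ↥(histClass 𝒜), risk (joint μ η) (𝒜.Fr η r) f.1) =
        bayesRisk (joint μ η) (𝒜.Fr η r) := by
  set P := joint μ η with hP
  set h := histRuleP 𝒜 P with hh
  have hFr : MeasurableSet (𝒜.Fr η r) := 𝒜.measurableSet_Fr η r
  have hhistmeas : Measurable h := by
    have he : h = fun x => sgn
        ((fun j => (P (𝒜.cell j ×ˢ ({1}:Set ℝ))).toReal -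
          (P (𝒜.cell j ×ˢ ({-1}:Set ℝ))).toReal) (𝒜.idx x)) := rfl
    rw [he]
    exact measurable_sgn.comp
      ((measurable_from_top (f := fun j => (P (𝒜.cell j ×ˢ ({1}:Set ℝ))).toReal -
          (P (𝒜.cell j ×ˢ ({-1}:Set ℝ))).toReal)).comp 𝒜.measurable_idx)
  have part1 : ∀ j ∈ 𝒜.JF η r,
      μ (symmDiff (X1 η) {x | 0 ≤ h x} ∩ 𝒜.cell j) = 0 := by
    intro j hj
    refine measure_mono_null ?_ (cell_good 𝒜 hd hs hμX hη hmeasη hr hj)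
    exact Set.inter_subset_inter_left _ Set.subset_union_left
  have hbadnull : μ ({x | gfun η h x ≠ mfun η x} ∩ 𝒜.Fr η r) = 0 := by
    have hsub : {x | gfun η h x ≠ mfun η x} ∩ 𝒜.Fr η r ⊆
        ⋃ j ∈ 𝒜.JF η r, ((symmDiff (X1 η) {x | 0 ≤ h x}
          ∪ {x | gfun η h x ≠ mfun η x}) ∩ 𝒜.cell j) := by
      rintro x ⟨hbad, hFrx⟩
      rw [CubePartition.Fr, Set.mem_iUnion₂] at hFrx
      obtain ⟨j, hj, hxj⟩ := hFrx
      exact Set.mem_iUnion₂.2 ⟨j, hj, ⟨Or.inr hbad, hxj⟩⟩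
    refine measure_mono_null hsub ?_
    exact (measure_biUnion_null_iff (Set.to_countable _)).2 fun j hj =>
      cell_good 𝒜 hd hs hμX hη hmeasη hr hj
  have hriskhist : risk P (𝒜.Fr η r) h = (∫⁻ x in 𝒜.Fr η r, mfun η x ∂μ).toReal := by
    rw [hP, risk_eq hmeasη hFr hhistmeas]
    congr 1
    refine setLIntegral_congr_fun_ae hFr ?_
    rw [ae_iff]
    refine measure_mono_null ?_ hbadnull
    intro x hx
    simp only [Set.mem_setOf_eq, not_forall] at hx
    exact ⟨hx.2, hx.1⟩
  have hbayes : bayesRisk P (𝒜.Fr η r) = (∫⁻ x in 𝒜.Fr η r, mfun η x ∂μ).toReal := by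
    rw [hP]; exact bayesRisk_eq hmeasη hη hFr
  refine ⟨part1, by rw [hriskhist, hbayes, sub_self], ?_⟩
  -- part 3
  set c0 : ℕ → ℝ := fun j => sgn ((P (𝒜.cell j ×ˢ ({1}:Set ℝ))).toReal -
    (P (𝒜.cell j ×ˢ ({-1}:Set ℝ))).toReal) with hc0
  set f0 : Pt d → ℝ := fun x => if 𝒜.idx x ∈ 𝒜.J then c0 (𝒜.idx x) else 0 with hf0
  have hf0mem : f0 ∈ histClass 𝒜 := by
    refine ⟨c0, fun j => ?_, fun x => rfl⟩
    rw [hc0]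
    by_cases h0 : 0 ≤ (P (𝒜.cell j ×ˢ ({1}:Set ℝ))).toReal -
        (P (𝒜.cell j ×ˢ ({-1}:Set ℝ))).toReal
    · exact Or.inl (sgn_of_nonneg h0)
    · exact Or.inr (sgn_of_neg (not_le.1 h0))
  have hclassmeas : ∀ g ∈ histClass 𝒜, Measurable g := by
    intro g hg
    obtain ⟨c, _, hgc⟩ := hg
    have : g = (fun j => if j ∈ 𝒜.J then c j else 0) ∘ 𝒜.idx := funext hgc
    rw [this]
    exact measurable_from_top.comp 𝒜.measurable_idx
  have hf0meas : Measurable f0 := hclassmeas f0 hf0mem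
  have hriskf0 : risk P (𝒜.Fr η r) f0 = risk P (𝒜.Fr η r) h := by
    rw [hP, risk_eq hmeasη hFr hf0meas, risk_eq hmeasη hFr hhistmeas]
    congr 1
    refine setLIntegral_congr_fun_ae hFr (Filter.Eventually.of_forall fun x hx => ?_)
    rw [CubePartition.Fr, Set.mem_iUnion₂] at hx
    obtain ⟨j, hj, hxj⟩ := hx
    have hidx : 𝒜.idx x = j := 𝒜.idx_eq hxj
    have hfe : f0 x = h x := by
      rw [hf0]
      simp only [hidx, if_pos hj.1]
      rw [hh, histRuleP, fBar_const 𝒜 _ hxj, hc0]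
    rw [gfun, gfun, hfe]
  have hnecls : Nonempty ↥(histClass 𝒜) := ⟨⟨f0, hf0mem⟩⟩
  have hbb : BddBelow (Set.range fun g : ↥(histClass 𝒜) => risk P (𝒜.Fr η r) g.1) := by
    refine ⟨(∫⁻ x in 𝒜.Fr η r, mfun η x ∂μ).toReal, ?_⟩
    rintro y ⟨g, rfl⟩
    exact risk_ge hmeasη hη hFr (hclassmeas g.1 g.2)
  apply le_antisymm
  · calc (⨅ f : ↥(histClass 𝒜), risk P (𝒜.Fr η r) f.1) ≤ risk P (𝒜.Fr η r) f0 :=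
        ciInf_le hbb ⟨f0, hf0mem⟩
    _ = bayesRisk P (𝒜.Fr η r) := by rw [hriskf0, hriskhist, hbayes]
  · rw [hbayes]
    exact le_ciInf fun g => risk_ge hmeasη hη hFr (hclassmeas g.1 g.2)

end RefinedMargin
end
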